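/- The equality relation on formulae (generated by associativity, commutativity, and unit laws) is decidable, and any two equal formulae have a common canonical form reachable in O(n²) rewrite steps, where n is the total size; moreover each rewrite step does not increase formula size. -/

import Mathlib

/-- Formulae of the calculus of structures in negation normal form. -/
inductive Formula : Type
  | top : Formula
  | bot : Formula
  | atom : ℕ → Formula
  | natom : ℕ → Formula
  | or : Formula → Formula → Formula
  | and : Formula → Formula → Formula
deriving DecidableEq

/-- Boolean evaluation of a formula under an assignment. -/
def Formula.eval (v : ℕ → Bool) : Formula → Bool
  | .top => true
  | .bot => false
  | .atom n => v n
  | .natom n => !(v n)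
  | .or a b => a.eval v || b.eval v
  | .and a b => a.eval v && b.eval v

/-- Size of a formula: number of unit and atom occurrences. -/
def Formula.size : Formula → ℕ
  | .top => 1
  | .bot => 1
  | .atom _ => 1
  | .natom _ => 1
  | .or a b => a.size + b.size
  | .and a b => a.size + b.size

/-- De Morgan dual (negation in negation normal form). -/
def Formula.dual : Formula → Formula
  | .top => .bot
  | .bot => .top
  | .atom n => .natom n
  | .natom n => .atom n
  | .or a b => .and a.dual b.dual
  | .and a b => .or a.dual b.dual

/-- The equality relation `=` on formulae: commutativity, associativity, unit
laws, closed under reflexivity, symmetry, transitivity and context closure. -/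
inductive FEq : Formula → Formula → Prop
  | orComm (a b) : FEq (.or a b) (.or b a)
  | andComm (a b) : FEq (.and a b) (.and b a)
  | orAssoc (a b c) : FEq (.or (.or a b) c) (.or a (.or b c))
  | andAssoc (a b c) : FEq (.and (.and a b) c) (.and a (.and b c))
  | orBot (a) : FEq (.or a .bot) a
  | andTop (a) : FEq (.and a .top) a
  | topTop : FEq (.or .top .top) .top
  | botBot : FEq (.and .bot .bot) .bot
  | refl (a) : FEq a a
  | symm {a b} : FEq a b → FEq b a
  | trans {a b c} : FEq a b → FEq b c → FEq a c
  | orCongL {a b} (c) : FEq a b → FEq (.or a c) (.or b c)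
  | orCongR {a b} (c) : FEq a b → FEq (.or c a) (.or c b)
  | andCongL {a b} (c) : FEq a b → FEq (.and a c) (.and b c)
  | andCongR {a b} (c) : FEq a b → FEq (.and c a) (.and c b)

/-- Closure of a rule relation under arbitrary formula contexts. -/
inductive CtxStep (R : Formula → Formula → Prop) : Formula → Formula → Prop
  | base {a b} : R a b → CtxStep R a b
  | orL {a b} (c) : CtxStep R a b → CtxStep R (.or a c) (.or b c)
  | orR {a b} (c) : CtxStep R a b → CtxStep R (.or c a) (.or c b)
  | andL {a b} (c) : CtxStep R a b → CtxStep R (.and a c) (.and b c)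
  | andR {a b} (c) : CtxStep R a b → CtxStep R (.and c a) (.and c b)

/-- `Deriv R α β l s`: there is a derivation from premiss `α` to conclusion `β`
using rules from `R` (applied inside contexts), of length `l` and total size `s`
(the sum of the sizes of all formulae appearing in the derivation). -/
inductive Deriv (R : Formula → Formula → Prop) : Formula → Formula → ℕ → ℕ → Prop
  | refl (a) : Deriv R a a 0 a.size
  | step {a b c l s} : CtxStep R a b → Deriv R b c l s → Deriv R a c (l + 1) (s + a.size)

/-- A single generating equation of the equality relation, in either direction. -/
inductive EqGenSym : Formula → Formula → Prop
  | orComm (a b) : EqGenSym (.or a b) (.or b a)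
  | andComm (a b) : EqGenSym (.and a b) (.and b a)
  | orAssoc (a b c) : EqGenSym (.or (.or a b) c) (.or a (.or b c))
  | orAssoc' (a b c) : EqGenSym (.or a (.or b c)) (.or (.or a b) c)
  | andAssoc (a b c) : EqGenSym (.and (.and a b) c) (.and a (.and b c))
  | andAssoc' (a b c) : EqGenSym (.and a (.and b c)) (.and (.and a b) c)
  | orBot (a) : EqGenSym (.or a .bot) a
  | orBot' (a) : EqGenSym a (.or a .bot)
  | andTop (a) : EqGenSym (.and a .top) a
  | andTop' (a) : EqGenSym a (.and a .top)
  | topTop : EqGenSym (.or .top .top) .top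
  | topTop' : EqGenSym .top (.or .top .top)
  | botBot : EqGenSym (.and .bot .bot) .bot
  | botBot' : EqGenSym .bot (.and .bot .bot)

/-- A chain of rewrite steps (one equation applied inside a context at a time)
in which no step increases the size of the formula. -/
inductive ChainNI : Formula → Formula → ℕ → Prop
  | refl (a) : ChainNI a a 0
  | step {a b c k} : CtxStep EqGenSym a b → b.size ≤ a.size →
      ChainNI b c k → ChainNI a c (k + 1)

namespace NF

open Formula

/-- Injective encoding of formulae into ℕ, used as sort key. -/
def enc : Formula → ℕ
  | .bot => 0
  | .top => 1
  | .atom n => 4*n+2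
  | .natom n => 4*n+3
  | .or a b => 4*(Nat.pair (enc a) (enc b)) + 4
  | .and a b => 4*(Nat.pair (enc a) (enc b)) + 5

theorem enc_inj : ∀ x y : Formula, enc x = enc y → x = y := by
  intro x
  induction x with
  | top => intro y; cases y <;> simp [enc] <;> omega
  | bot => intro y; cases y <;> simp [enc] <;> omega
  | atom n => intro y; cases y <;> simp [enc] <;> omega
  | natom n => intro y; cases y <;> simp [enc] <;> omega
  | or a b iha ihb =>
      intro y; cases y <;> simp [enc, Nat.pair_eq_pair] <;>
        first
          | omega
          | (rintro h1 h2; exact ⟨iha _ h1, ihb _ h2⟩)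
  | and a b iha ihb =>
      intro y; cases y <;> simp [enc, Nat.pair_eq_pair] <;>
        first
          | omega
          | (rintro h1 h2; exact ⟨iha _ h1, ihb _ h2⟩)

theorem enc_eq_zero {x : Formula} (h : enc x = 0) : x = .bot := enc_inj x .bot h
theorem enc_eq_one {x : Formula} (h : enc x = 1) : x = .top := enc_inj x .top h

theorem enc_ge_two {x : Formula} (h1 : x ≠ .bot) (h2 : x ≠ .top) : 2 ≤ enc x := by
  rcases Nat.lt_or_ge (enc x) 2 with h | h
  · interval_cases h3 : enc x
    · exact absurd (enc_eq_zero h3) h1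
    · exact absurd (enc_eq_one h3) h2
  · exact h

/-- The order relation used for sorting. -/
def R (x y : Formula) : Prop := enc x ≤ enc y

instance : IsAntisymm Formula R := ⟨fun _ _ h h' => enc_inj _ _ (Nat.le_antisymm h h')⟩
instance : IsTrans Formula R := ⟨fun _ _ _ h h' => Nat.le_trans h h'⟩
instance : IsTotal Formula R := ⟨fun _ _ => Nat.le_total _ _⟩

end NF

namespace NF

/-- Generic binary node: `true` is `or`, `false` is `and`. -/
def node : Bool → Formula → Formula → Formula
  | true, a, b => .or a b
  | false, a, b => .and a b

/-- The unit of the node (removed): `⊥` for `or`, `⊤` for `and`. -/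
def unitF : Bool → Formula
  | true => .bot
  | false => .top

/-- The dual unit (duplicates collapse): `⊤` for `or`, `⊥` for `and`. -/
def dupF : Bool → Formula
  | true => .top
  | false => .bot

def isNodeB : Bool → Formula → Bool
  | true, .or _ _ => true
  | false, .and _ _ => true
  | _, _ => false

/-- Head of the spine. -/
def headL : Bool → Formula → Formula
  | true, .or a _ => a
  | false, .and a _ => a
  | _, x => x

/-- The spine of a formula along the given node type. -/
def toL : Bool → Formula → List Formula
  | true, .or a c => a :: toL true c
  | false, .and a c => a :: toL false c
  | _, x => [x]

def ofL (b : Bool) : List Formula → Formula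
  | [] => unitF b
  | [x] => x
  | x :: y :: xs => node b x (ofL b (y :: xs))

/-- Merge of two lists sorted by `enc`. -/
def mergeL : List Formula → List Formula → List Formula
  | [], ys => ys
  | xs, [] => xs
  | x :: xs, y :: ys =>
      if enc x ≤ enc y then x :: mergeL xs (y :: ys) else y :: mergeL (x :: xs) ys
termination_by xs ys => xs.length + ys.length

/-- Remove units and collapse duplicated dual units. -/
def cleanL (b : Bool) (l : List Formula) : List Formula :=
  let f := l.filter (fun x => x ≠ unitF b)
  if dupF b ∈ f then dupF b :: f.filter (fun x => x ≠ dupF b) else f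

/-- Recursive cleaning, agreeing with `cleanL` on sorted lists. -/
def cleanRec (b : Bool) : List Formula → List Formula
  | [] => []
  | [x] => if x = unitF b then [] else [x]
  | x :: y :: t =>
    if x = unitF b then cleanRec b (y :: t)
    else if x = dupF b ∧ y = dupF b then cleanRec b (x :: t)
    else x :: cleanRec b (y :: t)
termination_by l => l.length

def mk (b : Bool) (X Y : Formula) : Formula :=
  ofL b (cleanL b (mergeL (toL b X) (toL b Y)))

/-- Canonical form. -/
def canon : Formula → Formula
  | .or a c => mk true (canon a) (canon c)
  | .and a c => mk false (canon a) (canon c)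
  | x => x

/-- Canonical (normal-form) formulae. -/
def IsNF : Formula → Prop
  | .or a c => isNodeB true a = false ∧ a ≠ .bot ∧ c ≠ .bot ∧
      (a = .top → headL true c ≠ .top) ∧ enc a ≤ enc (headL true c) ∧ IsNF a ∧ IsNF c
  | .and a c => isNodeB false a = false ∧ a ≠ .top ∧ c ≠ .top ∧
      (a = .bot → headL false c ≠ .bot) ∧ enc a ≤ enc (headL false c) ∧ IsNF a ∧ IsNF c
  | _ => True

theorem isNF_node {b a c} : IsNF (node b a c) ↔
    (isNodeB b a = false ∧ a ≠ unitF b ∧ c ≠ unitF b ∧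
      (a = dupF b → headL b c ≠ dupF b) ∧ enc a ≤ enc (headL b c) ∧ IsNF a ∧ IsNF c) := by
  cases b <;> simp [node, IsNF, unitF, dupF]

theorem isNF_leaf {x : Formula} (h : isNodeB true x = false) (h' : isNodeB false x = false) :
    IsNF x := by
  cases x <;> simp [IsNF] <;> simp [isNodeB] at h h'

theorem size_node {b x y} : (node b x y).size = x.size + y.size := by
  cases b <;> rfl

theorem size_pos (x : Formula) : 1 ≤ x.size := by
  induction x <;> simp [Formula.size] <;> omega

theorem toL_ne_nil {b x} : toL b x ≠ [] := by
  cases b <;> cases x <;> simp [toL]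

theorem toL_not_node {b x} (h : isNodeB b x = false) : toL b x = [x] := by
  cases b <;> cases x <;> simp_all [toL, isNodeB]

theorem toL_node {b a c} : toL b (node b a c) = a :: toL b c := by
  cases b <;> rfl

theorem headL_eq_head {b x} : ∃ t, toL b x = headL b x :: t := by
  cases b <;> cases x <;> exact ⟨_, rfl⟩

theorem ofL_cons {b x} {m : List Formula} (h : m ≠ []) :
    ofL b (x :: m) = node b x (ofL b m) := by
  cases m with
  | nil => exact absurd rfl h
  | cons y t => rfl

theorem ofL_toL {b} : ∀ x, ofL b (toL b x) = x := by
  intro x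
  induction x with
  | or a c iha ihc =>
      cases b
      · simp [toL, ofL]
      · rw [show toL true (.or a c) = a :: toL true c from rfl,
          ofL_cons toL_ne_nil, ihc]; rfl
  | and a c iha ihc =>
      cases b
      · rw [show toL false (.and a c) = a :: toL false c from rfl,
          ofL_cons toL_ne_nil, ihc]; rfl
      · simp [toL, ofL]
  | _ => cases b <;> rfl

theorem toL_ofL {b} : ∀ (l : List Formula), l ≠ [] → (∀ e ∈ l, isNodeB b e = false) →
    toL b (ofL b l) = l
  | [], h, _ => absurd rfl h
  | [x], _, he => by
      simp only [ofL]; exact toL_not_node (he x (by simp))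
  | x :: y :: t, _, he => by
      rw [ofL_cons (by simp), toL_node, toL_ofL (y :: t) (by simp)
        (fun e he' => he e (List.mem_cons_of_mem _ he'))]

theorem length_toL_le_size {b} : ∀ x : Formula, (toL b x).length ≤ x.size := by
  intro x
  induction x with
  | or a c _ ihc =>
      cases b
      · simpa [toL, Formula.size] using size_pos (Formula.or a c)
      · have := size_pos a
        simp [toL, Formula.size] at ihc ⊢
        omega
  | and a c _ ihc =>
      cases b
      · have := size_pos a
        simp [toL, Formula.size] at ihc ⊢
        omega
      · simpa [toL, Formula.size] using size_pos (Formula.and a c)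
  | _ => cases b <;> simp [toL, Formula.size]

end NF

namespace NF

theorem unit_ne_dup {b} : unitF b ≠ dupF b := by cases b <;> simp [unitF, dupF]

theorem dup_le_of_ne_unit {b} {e : Formula} (h : e ≠ unitF b) : enc (dupF b) ≤ enc e := by
  cases b
  · simp [dupF, enc]
  · simp only [dupF, unitF] at *
    show 1 ≤ enc e
    rcases Nat.eq_zero_or_pos (enc e) with h0 | h0
    · exact absurd (enc_eq_zero h0) h
    · exact h0

theorem length_mergeL : ∀ xs ys : List Formula, (mergeL xs ys).length = xs.length + ys.length
  | [], ys => by simp [mergeL]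
  | x :: xs, [] => by simp [mergeL]
  | x :: xs, y :: ys => by
      rw [mergeL]; split
      · simp [length_mergeL xs (y :: ys)]; omega
      · simp [length_mergeL (x :: xs) ys]; omega
termination_by xs ys => xs.length + ys.length

theorem perm_mergeL : ∀ xs ys : List Formula, (mergeL xs ys).Perm (xs ++ ys)
  | [], ys => by simp [mergeL]
  | x :: xs, [] => by simp [mergeL]
  | x :: xs, y :: ys => by
      rw [mergeL]; split
      · exact (perm_mergeL xs (y :: ys)).cons x
      · exact ((perm_mergeL (x :: xs) ys).cons y).trans List.perm_middle.symm
termination_by xs ys => xs.length + ys.length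

theorem mergeL_ne_nil {xs ys : List Formula} (h : xs ≠ []) : mergeL xs ys ≠ [] := by
  have hl := length_mergeL xs ys
  intro hc
  rw [hc] at hl
  simp only [List.length_nil] at hl
  have hx : xs.length = 0 := by omega
  exact h (List.length_eq_zero_iff.mp hx)

theorem sorted_mergeL : ∀ xs ys : List Formula, List.Pairwise R xs → List.Pairwise R ys →
    List.Pairwise R (mergeL xs ys)
  | [], ys, _, hy => by simpa [mergeL]
  | x :: xs, [], hx, _ => by simp only [mergeL]; exact hx
  | x :: xs, y :: ys, hx, hy => by
      rw [mergeL]; split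
      · rename_i h
        refine List.Pairwise.cons ?_ (sorted_mergeL xs (y :: ys) hx.of_cons hy)
        intro e he
        rcases List.mem_append.mp ((perm_mergeL xs (y :: ys)).mem_iff.mp he) with h1 | h1
        · exact List.rel_of_pairwise_cons hx h1
        · rcases List.mem_cons.mp h1 with rfl | h2
          · exact h
          · exact Nat.le_trans h (List.rel_of_pairwise_cons hy h2)
      · rename_i h
        have h' : enc y ≤ enc x := Nat.le_of_not_le h
        refine List.Pairwise.cons ?_ (sorted_mergeL (x :: xs) ys hx hy.of_cons)
        intro e he
        rcases List.mem_append.mp ((perm_mergeL (x :: xs) ys).mem_iff.mp he) with h1 | h1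
        · rcases List.mem_cons.mp h1 with rfl | h2
          · exact h'
          · exact Nat.le_trans h' (List.rel_of_pairwise_cons hx h2)
        · exact List.rel_of_pairwise_cons hy h1
termination_by xs ys => xs.length + ys.length

theorem cleanL_perm {b} {l l' : List Formula} (h : l.Perm l') : (cleanL b l).Perm (cleanL b l') := by
  simp only [cleanL]
  have hf := h.filter (fun x => decide (x ≠ unitF b))
  by_cases hm : dupF b ∈ l.filter (fun x => decide (x ≠ unitF b))
  · rw [if_pos hm, if_pos (hf.mem_iff.mp hm)]
    exact (hf.filter _).cons _
  · rw [if_neg hm, if_neg (fun c => hm (hf.mem_iff.mpr c))]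
    exact hf

theorem sorted_cleanL {b} {l : List Formula} (h : List.Pairwise R l) :
    List.Pairwise R (cleanL b l) := by
  simp only [cleanL]
  split
  · refine List.Pairwise.cons ?_ ((h.filter _).filter _)
    intro e he
    have he2 := List.mem_filter.mp (List.mem_filter.mp he).1
    exact dup_le_of_ne_unit (by simpa using he2.2)
  · exact h.filter _

theorem mem_cleanL {b} {l : List Formula} {e : Formula} (h : e ∈ cleanL b l) :
    e = dupF b ∨ e ∈ l := by
  simp only [cleanL] at h
  split at h
  · rcases List.mem_cons.mp h with rfl | h2
    · exact Or.inl rfl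
    · exact Or.inr (List.mem_filter.mp (List.mem_filter.mp h2).1).1
  · exact Or.inr (List.mem_filter.mp h).1

theorem not_unit_mem_cleanL {b} {l : List Formula} {e : Formula} (h : e ∈ cleanL b l) :
    e ≠ unitF b := by
  simp only [cleanL] at h
  split at h
  · rcases List.mem_cons.mp h with rfl | h2
    · exact unit_ne_dup.symm
    · exact by simpa using (List.mem_filter.mp (List.mem_filter.mp h2).1).2
  · exact by simpa using (List.mem_filter.mp h).2

theorem cleanL_unit_cons {b} (l : List Formula) : cleanL b (unitF b :: l) = cleanL b l := by
  simp [cleanL]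

theorem cleanL_eq_nil {b} {u : List Formula} (h : cleanL b u = []) :
    u.filter (fun x => decide (x ≠ unitF b)) = [] := by
  simp only [cleanL] at h
  split at h
  · exact absurd h (by simp)
  · exact h

theorem cleanL_append_left_nil {b} {u v : List Formula} (h : cleanL b u = []) :
    cleanL b (u ++ v) = cleanL b v := by
  have hf := cleanL_eq_nil h
  simp only [cleanL, List.filter_append, hf, List.nil_append]

theorem cleanL_cleanL_append {b} (u v : List Formula) :
    cleanL b (cleanL b u ++ v) = cleanL b (u ++ v) := by
  classical
  set p : Formula → Bool := fun x => decide (x ≠ unitF b) with hp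
  set q : Formula → Bool := fun x => decide (x ≠ dupF b) with hq
  have hpd : p (dupF b) = true := by
    simp only [hp, decide_eq_true_eq]; exact unit_ne_dup.symm
  have hqd : q (dupF b) = false := by simp [hq]
  by_cases hm : dupF b ∈ u.filter p
  · have hcu : cleanL b u = dupF b :: (u.filter p).filter q := by
      simp only [cleanL]; rw [if_pos hm]
    set f' : List Formula := (u.filter p).filter q with hf'def
    have hf' : List.filter p f' = f' :=
      List.filter_eq_self.mpr (fun a ha => (List.mem_filter.mp (List.mem_filter.mp ha).1).2)
    have hqf' : List.filter q f' = f' :=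
      List.filter_eq_self.mpr (fun a ha => (List.mem_filter.mp ha).2)
    rw [hcu]
    have e1 : List.filter p ((dupF b :: f') ++ v) = dupF b :: (f' ++ List.filter p v) := by
      simp [List.filter_cons, hpd, List.filter_append, hf']
    have e2 : List.filter p (u ++ v) = (u.filter p) ++ List.filter p v :=
      List.filter_append _ _
    simp only [cleanL, ← hp, ← hq, e1, e2]
    have hd1 : dupF b ∈ dupF b :: (f' ++ List.filter p v) := by simp
    have hd2 : dupF b ∈ u.filter p ++ List.filter p v := List.mem_append.mpr (Or.inl hm)
    rw [if_pos hd1, if_pos hd2]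
    congr 1
    rw [List.filter_cons, if_neg (by simp [hqd]), List.filter_append, List.filter_append, hqf']
  · have hcu : cleanL b u = u.filter p := by
      simp only [cleanL]; rw [if_neg hm]
    have hf : List.filter p (u.filter p) = u.filter p :=
      List.filter_eq_self.mpr (fun a ha => (List.mem_filter.mp ha).2)
    rw [hcu]
    simp only [cleanL, ← hp, ← hq, List.filter_append, hf]

end NF

namespace NF

theorem filter_q_eq_self {b} {l : List Formula} (h : dupF b ∉ l) :
    l.filter (fun e => decide (e ≠ dupF b)) = l :=
  List.filter_eq_self.mpr (fun a ha => by
    simp only [decide_eq_true_eq]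
    exact fun hc => h (hc ▸ ha))

theorem isNodeB_unit {b} : isNodeB b (unitF b) = false := by cases b <;> rfl
theorem isNodeB_dup {b} : isNodeB b (dupF b) = false := by cases b <;> rfl
theorem isNF_unit {b} : IsNF (unitF b) := by cases b <;> simp [unitF, IsNF]
theorem isNF_dup {b} : IsNF (dupF b) := by cases b <;> simp [dupF, IsNF]

theorem headL_not_node {b x} (h : isNodeB b x = false) : headL b x = x := by
  cases b <;> cases x <;> simp_all [headL, isNodeB]

theorem node_ne_unit {b x y} : node b x y ≠ unitF b := by
  cases b <;> simp [node, unitF]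

theorem spine_props {b} : ∀ {x}, IsNF x → ∀ e ∈ toL b x, IsNF e ∧ isNodeB b e = false := by
  intro x
  induction x with
  | or a c _ ihc =>
      intro h e he
      cases b with
      | false =>
          simp only [toL, List.mem_singleton] at he
          subst he; exact ⟨h, rfl⟩
      | true =>
          have h' := isNF_node.mp (show IsNF (node true a c) from h)
          simp only [toL] at he
          rcases List.mem_cons.mp he with rfl | he2
          · exact ⟨h'.2.2.2.2.2.1, h'.1⟩
          · exact ihc h'.2.2.2.2.2.2 e he2
  | and a c _ ihc =>
      intro h e he
      cases b with
      | true =>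
          simp only [toL, List.mem_singleton] at he
          subst he; exact ⟨h, rfl⟩
      | false =>
          have h' := isNF_node.mp (show IsNF (node false a c) from h)
          simp only [toL] at he
          rcases List.mem_cons.mp he with rfl | he2
          · exact ⟨h'.2.2.2.2.2.1, h'.1⟩
          · exact ihc h'.2.2.2.2.2.2 e he2
  | top => intro h e he; cases b <;> simp only [toL, List.mem_singleton] at he <;>
      (subst he; exact ⟨h, rfl⟩)
  | bot => intro h e he; cases b <;> simp only [toL, List.mem_singleton] at he <;>
      (subst he; exact ⟨h, rfl⟩)
  | atom n => intro h e he; cases b <;> simp only [toL, List.mem_singleton] at he <;>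
      (subst he; exact ⟨h, rfl⟩)
  | natom n => intro h e he; cases b <;> simp only [toL, List.mem_singleton] at he <;>
      (subst he; exact ⟨h, rfl⟩)

theorem spine_sorted {b} : ∀ {x}, IsNF x → List.Pairwise R (toL b x) := by
  intro x
  induction x with
  | or a c _ ihc =>
      intro h
      cases b with
      | false => simp [toL]
      | true =>
          have h' := isNF_node.mp (show IsNF (node true a c) from h)
          have hc := ihc h'.2.2.2.2.2.2
          simp only [toL]
          refine List.Pairwise.cons ?_ hc
          intro e he
          obtain ⟨t, ht⟩ := headL_eq_head (b := true) (x := c)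
          rw [ht] at he hc
          rcases List.mem_cons.mp he with rfl | he2
          · exact h'.2.2.2.2.1
          · exact Nat.le_trans h'.2.2.2.2.1 (List.rel_of_pairwise_cons hc he2)
  | and a c _ ihc =>
      intro h
      cases b with
      | true => simp [toL]
      | false =>
          have h' := isNF_node.mp (show IsNF (node false a c) from h)
          have hc := ihc h'.2.2.2.2.2.2
          simp only [toL]
          refine List.Pairwise.cons ?_ hc
          intro e he
          obtain ⟨t, ht⟩ := headL_eq_head (b := false) (x := c)
          rw [ht] at he hc
          rcases List.mem_cons.mp he with rfl | he2
          · exact h'.2.2.2.2.1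
          · exact Nat.le_trans h'.2.2.2.2.1 (List.rel_of_pairwise_cons hc he2)
  | top => intro _; cases b <;> simp [toL]
  | bot => intro _; cases b <;> simp [toL]
  | atom n => intro _; cases b <;> simp [toL]
  | natom n => intro _; cases b <;> simp [toL]

theorem spine_no_unit {b} : ∀ {x}, IsNF x → x ≠ unitF b → ∀ e ∈ toL b x, e ≠ unitF b := by
  intro x
  induction x with
  | or a c _ ihc =>
      intro h hx e he
      cases b with
      | false =>
          simp only [toL, List.mem_singleton] at he; subst he; exact hx
      | true =>
          have h' := isNF_node.mp (show IsNF (node true a c) from h)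
          simp only [toL] at he
          rcases List.mem_cons.mp he with rfl | he2
          · exact h'.2.1
          · exact ihc h'.2.2.2.2.2.2 h'.2.2.1 e he2
  | and a c _ ihc =>
      intro h hx e he
      cases b with
      | true =>
          simp only [toL, List.mem_singleton] at he; subst he; exact hx
      | false =>
          have h' := isNF_node.mp (show IsNF (node false a c) from h)
          simp only [toL] at he
          rcases List.mem_cons.mp he with rfl | he2
          · exact h'.2.1
          · exact ihc h'.2.2.2.2.2.2 h'.2.2.1 e he2
  | top => intro _ hx e he; cases b <;> simp only [toL, List.mem_singleton] at he <;>
      (subst he; exact hx)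
  | bot => intro _ hx e he; cases b <;> simp only [toL, List.mem_singleton] at he <;>
      (subst he; exact hx)
  | atom n => intro _ hx e he; cases b <;> simp only [toL, List.mem_singleton] at he <;>
      (subst he; exact hx)
  | natom n => intro _ hx e he; cases b <;> simp only [toL, List.mem_singleton] at he <;>
      (subst he; exact hx)

theorem cleanL_eq_self {b} {l : List Formula} (hs : List.Pairwise R l)
    (hu : ∀ e ∈ l, e ≠ unitF b)
    (hd : ∀ t, l = dupF b :: t → dupF b ∉ t) : cleanL b l = l := by
  have hf : l.filter (fun x => decide (x ≠ unitF b)) = l :=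
    List.filter_eq_self.mpr (fun a ha => by simpa using hu a ha)
  by_cases hm : dupF b ∈ l
  · -- head must be the dup
    cases l with
    | nil => simp at hm
    | cons x t =>
        have hx : x = dupF b := by
          rcases List.mem_cons.mp hm with h1 | h1
          · exact h1.symm
          · have h2 : enc x ≤ enc (dupF b) := List.rel_of_pairwise_cons hs h1
            have h3 : enc (dupF b) ≤ enc x := dup_le_of_ne_unit (hu x (by simp))
            exact enc_inj _ _ (Nat.le_antisymm h2 h3)
        subst hx
        have hnt : dupF b ∉ t := hd t rfl
        simp only [cleanL, hf, if_pos hm]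
        congr 1
        rw [List.filter_cons, if_neg (by simp), filter_q_eq_self hnt]
  · simp only [cleanL, hf, if_neg hm]

theorem cleanL_spine {b} {x : Formula} (h : IsNF x) (hx : x ≠ unitF b) :
    cleanL b (toL b x) = toL b x := by
  refine cleanL_eq_self (spine_sorted h) (spine_no_unit h hx) ?_
  intro t ht hmem
  -- if the spine is dup :: t then dup ∉ t
  by_cases hn : isNodeB b x = false
  · rw [toL_not_node hn] at ht
    cases ht; simp at hmem
  · have hnode : ∃ a c, x = node b a c := by
      cases b <;> cases x <;> simp_all [isNodeB] <;> exact ⟨_, _, rfl⟩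
    obtain ⟨a, c, rfl⟩ := hnode
    rw [toL_node] at ht
    obtain ⟨rfl, rfl⟩ : a = dupF b ∧ t = toL b c := by
      exact ⟨(List.cons_eq_cons.mp ht).1, ((List.cons_eq_cons.mp ht).2).symm⟩
    have h' := isNF_node.mp h
    have h4 := h'.2.2.2.1 rfl
    have h5 := h'.2.2.2.2.1
    have hcs := spine_sorted (b := b) h'.2.2.2.2.2.2
    obtain ⟨t', ht'⟩ := headL_eq_head (b := b) (x := c)
    rw [ht'] at hmem hcs
    rcases List.mem_cons.mp hmem with h1 | h1
    · exact h4 h1.symm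
    · have h2 : enc (headL b c) ≤ enc (dupF b) := List.rel_of_pairwise_cons hcs h1
      exact h4 (enc_inj _ _ (Nat.le_antisymm h2 h5))

end NF

namespace NF

theorem cleanL_singleton {b x} : cleanL b [x] = if x = unitF b then [] else [x] := by
  by_cases hx : x = unitF b
  · subst hx; simp [cleanL]
  · by_cases hd : x = dupF b
    · subst hd; simp [cleanL, unit_ne_dup.symm]
    · have h1 : List.filter (fun e => decide (e ≠ unitF b)) [x] = [x] := by
        simp [hx]
      simp only [cleanL, h1]
      rw [if_neg (by simp only [List.mem_singleton]; exact fun h => hd h.symm), if_neg hx]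

theorem cleanL_dup_cons {b} (l : List Formula) :
    cleanL b (dupF b :: l) =
      dupF b :: (l.filter (fun x => decide (x ≠ unitF b))).filter
        (fun x => decide (x ≠ dupF b)) := by
  have hh : decide (dupF b ≠ unitF b) = true := by
    simp only [decide_eq_true_eq]
    exact fun h => unit_ne_dup h.symm
  have hfil : List.filter (fun x => decide (x ≠ unitF b)) (dupF b :: l)
      = dupF b :: List.filter (fun x => decide (x ≠ unitF b)) l := by
    rw [List.filter_cons, if_pos hh]
  simp only [cleanL, hfil]
  rw [if_pos List.mem_cons_self]
  congr 1
  rw [List.filter_cons, if_neg (by simp)]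

theorem cleanL_eq_cleanRec {b} : ∀ l : List Formula, List.Pairwise R l →
    cleanL b l = cleanRec b l
  | [], _ => by simp [cleanL, cleanRec]
  | [x], _ => by rw [cleanL_singleton]; simp [cleanRec]
  | x :: y :: t, hs => by
      by_cases hx : x = unitF b
      · subst hx
        rw [cleanL_unit_cons, cleanL_eq_cleanRec (y :: t) hs.of_cons]
        simp [cleanRec]
      · by_cases hxy : x = dupF b ∧ y = dupF b
        · obtain ⟨rfl, hy⟩ := hxy
          subst hy
          have key : cleanL b (dupF b :: dupF b :: t) = cleanL b (dupF b :: t) := by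
            rw [cleanL_dup_cons, cleanL_dup_cons]
            congr 1
            rw [List.filter_cons,
              if_pos (by simp only [ne_eq, decide_eq_true_eq]; exact fun h => unit_ne_dup h.symm),
              List.filter_cons, if_neg (by simp)]
          rw [key, cleanL_eq_cleanRec (dupF b :: t) hs.of_cons]
          rw [cleanRec, if_neg hx, if_pos ⟨rfl, rfl⟩]
        · -- the "keep head" case
          have hdup_tail : dupF b ∉ y :: t := by
            intro hmem
            by_cases hxd : x = dupF b
            · have hy : y ≠ dupF b := fun hy => hxy ⟨hxd, hy⟩
              rcases List.mem_cons.mp hmem with h1 | h1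
              · exact hy h1.symm
              · have h2 : enc y ≤ enc (dupF b) :=
                  List.rel_of_pairwise_cons hs.of_cons h1
                have h3 : enc x ≤ enc y := List.rel_of_pairwise_cons hs (by simp)
                have h4 : enc (dupF b) ≤ enc y := by rw [← hxd]; exact h3
                exact hy (enc_inj _ _ (Nat.le_antisymm h2 h4))
            · -- x is not unit, not dup, so enc x ≥ 2; everything after is ≥ 2
              have hx2 : 2 ≤ enc x := by
                apply enc_ge_two <;> cases b <;> simp_all [unitF, dupF]
              have h2 : enc x ≤ enc (dupF b) := List.rel_of_pairwise_cons hs hmem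
              have h3 : enc (dupF b) ≤ 1 := by cases b <;> simp [dupF, enc]
              omega
          have hq : List.filter (fun e => decide (e ≠ unitF b)) (y :: t) =
              List.filter (fun e => decide (e ≠ unitF b)) (y :: t) := rfl
          have hsub : dupF b ∉ List.filter (fun e => decide (e ≠ unitF b)) (y :: t) :=
            fun hc => hdup_tail (List.mem_filter.mp hc).1
          have key : cleanL b (x :: y :: t) = x :: cleanL b (y :: t) := by
            have hfil : List.filter (fun e => decide (e ≠ unitF b)) (x :: y :: t)
                = x :: List.filter (fun e => decide (e ≠ unitF b)) (y :: t) := by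
              rw [List.filter_cons, if_pos (by simp only [decide_eq_true_eq]; exact hx)]
            by_cases hxd : x = dupF b
            · subst hxd
              rw [cleanL_dup_cons, filter_q_eq_self hsub]
              congr 1
              simp only [cleanL]
              rw [if_neg hsub]
            · simp only [cleanL, hfil]
              rw [if_neg (by
                simp only [List.mem_cons]
                rintro (h1 | h1)
                · exact hxd h1.symm
                · exact hsub h1), if_neg hsub]
          rw [key, cleanL_eq_cleanRec (y :: t) hs.of_cons]
          rw [cleanRec, if_neg hx, if_neg hxy]

theorem chain'_no_dup {b} : ∀ {l : List Formula}, (∀ e ∈ l, e ≠ dupF b) →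
    List.Chain' (fun x y => ¬(x = dupF b ∧ y = dupF b)) l := by
  intro l
  induction l with
  | nil => intro _; exact List.isChain_nil
  | cons x t ih =>
      intro h
      rw [List.Chain', List.isChain_cons]
      exact ⟨fun z _ hc => h x (by simp) hc.1,
        ih (fun e he => h e (List.mem_cons_of_mem _ he))⟩

theorem chain'_cleanL {b} (l : List Formula) :
    List.Chain' (fun x y => ¬(x = dupF b ∧ y = dupF b)) (cleanL b l) := by
  simp only [cleanL]
  split
  · rw [List.Chain', List.isChain_cons]
    refine ⟨?_, chain'_no_dup (fun e he => by simpa using (List.mem_filter.mp he).2)⟩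
    intro z hz hcontra
    have hzg := List.mem_of_mem_head? hz
    have h2 := (List.mem_filter.mp hzg).2
    simp only [ne_eq, decide_not, Bool.not_eq_true', decide_eq_false_iff_not] at h2
    exact h2 hcontra.2
  · apply chain'_no_dup
    intro e he hc
    rename_i hm
    exact hm (hc ▸ he)

theorem headL_ofL {b y t} (h : isNodeB b y = false) : headL b (ofL b (y :: t)) = y := by
  cases t with
  | nil => exact headL_not_node h
  | cons z t' => rw [ofL_cons (by simp)]; cases b <;> rfl

theorem isNF_ofL {b} : ∀ l : List Formula, List.Pairwise R l →
    (∀ e ∈ l, IsNF e ∧ isNodeB b e = false ∧ e ≠ unitF b) →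
    List.Chain' (fun x y => ¬(x = dupF b ∧ y = dupF b)) l →
    IsNF (ofL b l)
  | [], _, _, _ => isNF_unit
  | [x], _, he, _ => (he x (by simp)).1
  | x :: y :: t, hs, he, hc => by
      rw [ofL_cons (by simp)]
      apply isNF_node.mpr
      have hy := he y (by simp)
      have hx := he x (by simp)
      have hhead : headL b (ofL b (y :: t)) = y := headL_ofL hy.2.1
      refine ⟨hx.2.1, hx.2.2, ?_, ?_, ?_, hx.1, ?_⟩
      · cases t with
        | nil => exact hy.2.2
        | cons z t' => rw [ofL_cons (by simp)]; exact node_ne_unit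
      · intro hxd hyd
        rw [hhead] at hyd
        exact (List.isChain_cons_cons.mp hc).1 ⟨hxd, hyd⟩
      · rw [hhead]
        exact List.rel_of_pairwise_cons hs (by simp)
      · exact isNF_ofL (y :: t) hs.of_cons
          (fun e hee => he e (List.mem_cons_of_mem _ hee)) (List.isChain_cons_cons.mp hc).2

theorem isNF_mk {b X Y} (hX : IsNF X) (hY : IsNF Y) : IsNF (mk b X Y) := by
  have hs : List.Pairwise R (mergeL (toL b X) (toL b Y)) :=
    sorted_mergeL _ _ (spine_sorted hX) (spine_sorted hY)
  apply isNF_ofL _ (sorted_cleanL hs) ?_ (chain'_cleanL _)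
  intro e he
  refine ⟨?_, ?_, not_unit_mem_cleanL he⟩ <;>
  · rcases mem_cleanL he with rfl | hm
    · first | exact isNF_dup | exact isNodeB_dup
    · rcases List.mem_append.mp ((perm_mergeL _ _).mem_iff.mp hm) with h1 | h1
      · first | exact (spine_props hX e h1).1 | exact (spine_props hX e h1).2
      · first | exact (spine_props hY e h1).1 | exact (spine_props hY e h1).2

theorem canon_isNF : ∀ x : Formula, IsNF (canon x)
  | .or a c => isNF_mk (canon_isNF a) (canon_isNF c)
  | .and a c => isNF_mk (canon_isNF a) (canon_isNF c)
  | .top => trivial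
  | .bot => trivial
  | .atom _ => trivial
  | .natom _ => trivial

end NF

namespace NF

theorem eq_of_perm_sorted {l1 l2 : List Formula} (h : l1.Perm l2)
    (s1 : List.Pairwise R l1) (s2 : List.Pairwise R l2) : l1 = l2 :=
  List.Perm.eq_of_pairwise' s1 s2 h

theorem mk_comm {b X Y} (hX : IsNF X) (hY : IsNF Y) : mk b X Y = mk b Y X := by
  unfold mk
  congr 1
  apply eq_of_perm_sorted
  · exact cleanL_perm ((perm_mergeL _ _).trans
      (List.perm_append_comm.trans (perm_mergeL _ _).symm))
  · exact sorted_cleanL (sorted_mergeL _ _ (spine_sorted hX) (spine_sorted hY))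
  · exact sorted_cleanL (sorted_mergeL _ _ (spine_sorted hY) (spine_sorted hX))

theorem mem_clean_merge_not_node {b X Y} (hX : IsNF X) (hY : IsNF Y) :
    ∀ e ∈ cleanL b (mergeL (toL b X) (toL b Y)), isNodeB b e = false := fun e he => by
  rcases mem_cleanL he with rfl | hm
  · exact isNodeB_dup
  · rcases List.mem_append.mp ((perm_mergeL _ _).mem_iff.mp hm) with h1 | h1
    · exact (spine_props hX e h1).2
    · exact (spine_props hY e h1).2

theorem cleanL_merge_mk_left {b X Y} (hX : IsNF X) (hY : IsNF Y) (z : List Formula) :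
    (cleanL b (mergeL (toL b (mk b X Y)) z)).Perm
      (cleanL b ((toL b X ++ toL b Y) ++ z)) := by
  set u := mergeL (toL b X) (toL b Y) with hu
  have huperm : u.Perm (toL b X ++ toL b Y) := perm_mergeL _ _
  by_cases hnil : cleanL b u = []
  · have hmk : mk b X Y = unitF b := by rw [mk, ← hu, hnil]; rfl
    rw [hmk, toL_not_node isNodeB_unit]
    have p1 : (cleanL b (mergeL [unitF b] z)).Perm (cleanL b (unitF b :: z)) :=
      cleanL_perm (perm_mergeL _ _)
    rw [cleanL_unit_cons] at p1
    have p2 : (cleanL b ((toL b X ++ toL b Y) ++ z)).Perm (cleanL b (u ++ z)) :=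
      cleanL_perm (huperm.symm.append_right z)
    rw [cleanL_append_left_nil hnil] at p2
    exact p1.trans p2.symm
  · have htoL : toL b (mk b X Y) = cleanL b u := by
      rw [mk, ← hu]; exact toL_ofL _ hnil (mem_clean_merge_not_node hX hY)
    rw [htoL]
    refine (cleanL_perm (perm_mergeL _ _)).trans ?_
    rw [cleanL_cleanL_append u z]
    exact cleanL_perm (huperm.append_right z)

theorem cleanL_merge_mk_right {b Y Z} (hY : IsNF Y) (hZ : IsNF Z) (x : List Formula) :
    (cleanL b (mergeL x (toL b (mk b Y Z)))).Perm
      (cleanL b (x ++ (toL b Y ++ toL b Z))) := by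
  set u := mergeL (toL b Y) (toL b Z) with hu
  have huperm : u.Perm (toL b Y ++ toL b Z) := perm_mergeL _ _
  by_cases hnil : cleanL b u = []
  · have hmk : mk b Y Z = unitF b := by rw [mk, ← hu, hnil]; rfl
    rw [hmk, toL_not_node isNodeB_unit]
    have p1 : (cleanL b (mergeL x [unitF b])).Perm (cleanL b (unitF b :: x)) :=
      cleanL_perm ((perm_mergeL _ _).trans (List.perm_append_comm))
    rw [cleanL_unit_cons] at p1
    have p2 : (cleanL b (x ++ (toL b Y ++ toL b Z))).Perm (cleanL b (u ++ x)) :=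
      cleanL_perm (List.perm_append_comm.trans (huperm.symm.append_right x))
    rw [cleanL_append_left_nil hnil] at p2
    exact p1.trans p2.symm
  · have htoL : toL b (mk b Y Z) = cleanL b u := by
      rw [mk, ← hu]; exact toL_ofL _ hnil (mem_clean_merge_not_node hY hZ)
    rw [htoL]
    refine (cleanL_perm ((perm_mergeL _ _).trans List.perm_append_comm)).trans ?_
    rw [cleanL_cleanL_append u x]
    exact cleanL_perm ((huperm.append_right x).trans List.perm_append_comm)

theorem mk_assoc {b X Y Z} (hX : IsNF X) (hY : IsNF Y) (hZ : IsNF Z) :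
    mk b (mk b X Y) Z = mk b X (mk b Y Z) := by
  unfold mk
  congr 1
  apply eq_of_perm_sorted
  · refine (cleanL_merge_mk_left hX hY (toL b Z)).trans ?_
    refine (cleanL_perm ?_).trans (cleanL_merge_mk_right hY hZ (toL b X)).symm
    rw [List.append_assoc]
  · exact sorted_cleanL (sorted_mergeL _ _ (spine_sorted (isNF_mk hX hY)) (spine_sorted hZ))
  · exact sorted_cleanL (sorted_mergeL _ _ (spine_sorted hX) (spine_sorted (isNF_mk hY hZ)))

theorem mergeL_single {x y : Formula} (h : enc x ≤ enc y) :
    mergeL [x] [y] = [x, y] := by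
  rw [mergeL, if_pos h, mergeL]

theorem mk_unit {b X} (hX : IsNF X) : mk b X (unitF b) = X := by
  by_cases hxu : X = unitF b
  · subst hxu
    rw [mk, toL_not_node isNodeB_unit, mergeL_single (Nat.le_refl _)]
    have : cleanL b [unitF b, unitF b] = [] := by simp [cleanL]
    rw [this]
    rfl
  · rw [mk, toL_not_node isNodeB_unit]
    have heq : cleanL b (mergeL (toL b X) [unitF b]) = toL b X := by
      apply eq_of_perm_sorted
      · have p1 : (cleanL b (mergeL (toL b X) [unitF b])).Perm
            (cleanL b (unitF b :: toL b X)) :=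
          cleanL_perm ((perm_mergeL _ _).trans List.perm_append_comm)
        rw [cleanL_unit_cons, cleanL_spine hX hxu] at p1
        exact p1
      · exact sorted_cleanL (sorted_mergeL _ _ (spine_sorted hX) (by simp))
      · exact spine_sorted hX
    rw [heq, ofL_toL]

theorem mk_dup {b} : mk b (dupF b) (dupF b) = dupF b := by
  rw [mk, toL_not_node isNodeB_dup, mergeL_single (Nat.le_refl _)]
  have h1 : cleanL b [dupF b, dupF b] = [dupF b] := by
    rw [show ([dupF b, dupF b] : List Formula) = dupF b :: [dupF b] from rfl,
      cleanL_dup_cons]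
    congr 1
    rw [List.filter_cons, if_pos (by
      simp only [ne_eq, decide_eq_true_eq]
      exact fun h => unit_ne_dup h.symm), List.filter_nil, List.filter_cons,
      if_neg (by simp), List.filter_nil]
  rw [h1]
  rfl

theorem canon_or (a c : Formula) : canon (.or a c) = mk true (canon a) (canon c) := rfl
theorem canon_and (a c : Formula) : canon (.and a c) = mk false (canon a) (canon c) := rfl

theorem canon_FEq {x y : Formula} (h : FEq x y) : canon x = canon y := by
  induction h with
  | orComm a c => exact mk_comm (canon_isNF a) (canon_isNF c)
  | andComm a c => exact mk_comm (canon_isNF a) (canon_isNF c)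
  | orAssoc a c d => exact mk_assoc (canon_isNF a) (canon_isNF c) (canon_isNF d)
  | andAssoc a c d => exact mk_assoc (canon_isNF a) (canon_isNF c) (canon_isNF d)
  | orBot a => exact mk_unit (canon_isNF a)
  | andTop a => exact mk_unit (canon_isNF a)
  | topTop => exact mk_dup (b := true)
  | botBot => exact mk_dup (b := false)
  | refl a => rfl
  | symm _ ih => exact ih.symm
  | trans _ _ ih1 ih2 => exact ih1.trans ih2
  | orCongL c _ ih => rw [canon_or, canon_or, ih]
  | orCongR c _ ih => rw [canon_or, canon_or, ih]
  | andCongL c _ ih => rw [canon_and, canon_and, ih]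
  | andCongR c _ ih => rw [canon_and, canon_and, ih]

end NF

namespace NF

theorem chain_cast {a b : Formula} {k k' : ℕ} (h : ChainNI a b k) (e : k = k') :
    ChainNI a b k' := e ▸ h

theorem chain_trans {a b c : Formula} {k k' : ℕ} (h1 : ChainNI a b k)
    (h2 : ChainNI b c k') : ChainNI a c (k + k') := by
  induction h1 with
  | refl => exact chain_cast h2 (by omega)
  | step hstep hsz _ ih => exact chain_cast (.step hstep hsz (ih h2)) (by omega)

theorem chain_size {a b : Formula} {k : ℕ} (h : ChainNI a b k) : b.size ≤ a.size := by
  induction h with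
  | refl => exact Nat.le_refl _
  | step _ hsz _ ih => omega

theorem ctx_nodeL {b} {x y c : Formula} (h : CtxStep EqGenSym x y) :
    CtxStep EqGenSym (node b x c) (node b y c) := by
  cases b
  · exact .andL c h
  · exact .orL c h

theorem ctx_nodeR {b} {x y c : Formula} (h : CtxStep EqGenSym x y) :
    CtxStep EqGenSym (node b c x) (node b c y) := by
  cases b
  · exact .andR c h
  · exact .orR c h

theorem gen_comm {b} {x y : Formula} : EqGenSym (node b x y) (node b y x) := by
  cases b
  · exact .andComm x y
  · exact .orComm x y

theorem gen_assoc {b} {x y z : Formula} :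
    EqGenSym (node b (node b x y) z) (node b x (node b y z)) := by
  cases b
  · exact .andAssoc x y z
  · exact .orAssoc x y z

theorem gen_assoc' {b} {x y z : Formula} :
    EqGenSym (node b x (node b y z)) (node b (node b x y) z) := by
  cases b
  · exact .andAssoc' x y z
  · exact .orAssoc' x y z

theorem gen_unit {b} {x : Formula} : EqGenSym (node b x (unitF b)) x := by
  cases b
  · exact .andTop x
  · exact .orBot x

theorem gen_dup {b} : EqGenSym (node b (dupF b) (dupF b)) (dupF b) := by
  cases b
  · exact .botBot
  · exact .topTop

theorem size_unit {b} : (unitF b).size = 1 := by cases b <;> rfl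
theorem size_dup {b} : (dupF b).size = 1 := by cases b <;> rfl

theorem chain_one {x y : Formula} (h : CtxStep EqGenSym x y) (hs : y.size ≤ x.size) :
    ChainNI x y 1 := .step h hs (.refl _)

theorem chain_ctxL {b} {x y c : Formula} {k} (h : ChainNI x y k) :
    ChainNI (node b x c) (node b y c) k := by
  induction h with
  | refl => exact .refl _
  | step hstep hsz _ ih =>
      exact .step (ctx_nodeL hstep) (by rw [size_node, size_node]; omega) ih

theorem chain_ctxR {b} {x y c : Formula} {k} (h : ChainNI x y k) :
    ChainNI (node b c x) (node b c y) k := by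
  induction h with
  | refl => exact .refl _
  | step hstep hsz _ ih =>
      exact .step (ctx_nodeR hstep) (by rw [size_node, size_node]; omega) ih

theorem mergeL_nil_right : ∀ xs : List Formula, mergeL xs [] = xs
  | [] => by rw [mergeL]
  | x :: xs => by rw [mergeL] <;> simp

theorem cleanRec_nil {b} : cleanRec b [] = [] := by rw [cleanRec]

theorem cleanRec_single {b x} : cleanRec b [x] = if x = unitF b then [] else [x] := by
  rw [cleanRec]

theorem cleanRec_cons2 {b x y t} : cleanRec b (x :: y :: t) =
    if x = unitF b then cleanRec b (y :: t)
    else if x = dupF b ∧ y = dupF b then cleanRec b (x :: t)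
    else x :: cleanRec b (y :: t) := by
  rw [cleanRec]

theorem chain_merge {b} : ∀ (n : ℕ) (xs ys : List Formula),
    xs.length + ys.length ≤ n → xs ≠ [] → ys ≠ [] →
    ∃ k, ChainNI (node b (ofL b xs) (ofL b ys)) (ofL b (mergeL xs ys)) k ∧
      k ≤ 3 * (xs.length + ys.length) := by
  intro n
  induction n with
  | zero =>
      intro xs ys hlen hx hy
      exfalso
      have := List.length_pos_iff.mpr hx
      have := List.length_pos_iff.mpr hy
      omega
  | succ n ih =>
      intro xs ys hlen hx hy
      match xs, ys with
      | x :: xs', y :: ys' =>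
        rw [mergeL]
        by_cases hle : enc x ≤ enc y
        · rw [if_pos hle]
          cases xs' with
          | nil =>
              rw [show mergeL [] (y :: ys') = y :: ys' from by rw [mergeL]]
              exact ⟨0, .refl _, by omega⟩
          | cons x2 xs'' =>
              have hne : (x2 :: xs'') ≠ [] := by simp
              obtain ⟨k', hc', hk'⟩ := ih (x2 :: xs'') (y :: ys')
                (by simp at hlen ⊢; omega) hne (by simp)
              have s1 : ChainNI (node b (ofL b (x :: x2 :: xs'')) (ofL b (y :: ys')))
                  (node b x (node b (ofL b (x2 :: xs'')) (ofL b (y :: ys')))) 1 := by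
                rw [ofL_cons hne]
                exact chain_one (.base gen_assoc)
                  (le_of_eq (by simp only [size_node]; omega))
              have s2 : ChainNI (node b x (node b (ofL b (x2 :: xs'')) (ofL b (y :: ys'))))
                  (node b x (ofL b (mergeL (x2 :: xs'') (y :: ys')))) k' := chain_ctxR hc'
              refine ⟨1 + k', ?_, by simp at hk' ⊢; omega⟩
              rw [ofL_cons (mergeL_ne_nil hne)]
              exact chain_trans s1 s2
        · rw [if_neg hle]
          cases ys' with
          | nil =>
              rw [mergeL_nil_right]
              refine ⟨1, ?_, by simp only [List.length_cons, List.length_nil]; omega⟩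
              rw [ofL_cons (show (x :: xs') ≠ [] from by simp)]
              exact chain_one (.base gen_comm)
                (le_of_eq (by
                  show (node b y (ofL b (x :: xs'))).size = (node b (ofL b (x :: xs')) y).size
                  rw [size_node, size_node]; omega))
          | cons y2 ys'' =>
              have hne : (y2 :: ys'') ≠ [] := by simp
              obtain ⟨k', hc', hk'⟩ := ih (x :: xs') (y2 :: ys'')
                (by simp at hlen ⊢; omega) (by simp) hne
              set X := ofL b (x :: xs') with hX
              set Y' := ofL b (y2 :: ys'') with hY'
              have e1 : ofL b (y :: y2 :: ys'') = node b y Y' := ofL_cons hne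
              have s1 : ChainNI (node b X (node b y Y')) (node b (node b X y) Y') 1 :=
                chain_one (.base gen_assoc') (le_of_eq (by simp only [size_node]; omega))
              have s2 : ChainNI (node b (node b X y) Y') (node b (node b y X) Y') 1 :=
                chain_one (ctx_nodeL (.base gen_comm))
                  (le_of_eq (by simp only [size_node]; omega))
              have s3 : ChainNI (node b (node b y X) Y') (node b y (node b X Y')) 1 :=
                chain_one (.base gen_assoc) (le_of_eq (by simp only [size_node]; omega))
              have s4 : ChainNI (node b y (node b X Y'))
                  (node b y (ofL b (mergeL (x :: xs') (y2 :: ys'')))) k' := chain_ctxR hc'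
              refine ⟨1 + 1 + 1 + k', ?_, by simp at hk' ⊢; omega⟩
              rw [e1, ofL_cons (mergeL_ne_nil (show (x :: xs') ≠ [] from by simp))]
              exact chain_trans (chain_trans (chain_trans s1 s2) s3) s4

theorem chain_cleanRec {b} : ∀ (n : ℕ) (l : List Formula), l.length ≤ n →
    ∃ k, ChainNI (ofL b l) (ofL b (cleanRec b l)) k ∧ k ≤ 2 * l.length := by
  intro n
  induction n with
  | zero =>
      intro l hlen
      have : l = [] := List.length_eq_zero_iff.mp (by omega)
      subst this
      rw [cleanRec_nil]
      exact ⟨0, .refl _, by omega⟩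
  | succ n ih =>
      intro l hlen
      match l with
      | [] =>
          rw [cleanRec_nil]
          exact ⟨0, .refl _, by omega⟩
      | [x] =>
          rw [cleanRec_single]
          by_cases hx : x = unitF b
          · rw [if_pos hx]; subst hx; exact ⟨0, .refl _, by omega⟩
          · rw [if_neg hx]; exact ⟨0, .refl _, by omega⟩
      | x :: y :: t =>
          rw [cleanRec_cons2]
          by_cases hxu : x = unitF b
          · rw [if_pos hxu]
            subst hxu
            obtain ⟨k', hc', hk'⟩ := ih (y :: t) (by simp only [List.length_cons] at hlen ⊢; omega)
            have s1 : ChainNI (ofL b (unitF b :: y :: t))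
                (node b (ofL b (y :: t)) (unitF b)) 1 := by
              rw [ofL_cons (by simp)]
              exact chain_one (.base gen_comm) (le_of_eq (by simp only [size_node]; omega))
            have s2 : ChainNI (node b (ofL b (y :: t)) (unitF b)) (ofL b (y :: t)) 1 :=
              chain_one (.base gen_unit) (by simp only [size_node, size_unit]; omega)
            exact ⟨1 + 1 + k', chain_trans (chain_trans s1 s2) hc',
              by simp only [List.length_cons] at hk' ⊢; omega⟩
          · rw [if_neg hxu]
            by_cases hxy : x = dupF b ∧ y = dupF b
            · rw [if_pos hxy]
              obtain ⟨rfl, rfl⟩ := hxy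
              cases t with
              | nil =>
                  rw [cleanRec_single, if_neg hxu]
                  refine ⟨1, ?_, by simp only [List.length_cons]; omega⟩
                  exact chain_one (.base gen_dup)
                    (by
                      show (dupF b).size ≤ (node b (dupF b) (dupF b)).size
                      rw [size_node]; omega)
              | cons z t' =>
                  obtain ⟨k', hc', hk'⟩ := ih (dupF b :: z :: t')
                    (by simp only [List.length_cons] at hlen ⊢; omega)
                  have s1 : ChainNI (ofL b (dupF b :: dupF b :: z :: t'))
                      (node b (node b (dupF b) (dupF b)) (ofL b (z :: t'))) 1 := by
                    rw [ofL_cons (by simp), ofL_cons (by simp)]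
                    exact chain_one (.base gen_assoc')
                      (le_of_eq (by simp only [size_node]; omega))
                  have s2 : ChainNI (node b (node b (dupF b) (dupF b)) (ofL b (z :: t')))
                      (node b (dupF b) (ofL b (z :: t'))) 1 :=
                    chain_one (ctx_nodeL (.base gen_dup))
                      (by simp only [size_node, size_dup]; omega)
                  have s3 : ChainNI (node b (dupF b) (ofL b (z :: t')))
                      (ofL b (cleanRec b (dupF b :: z :: t'))) k' := by
                    rw [← ofL_cons (by simp)]
                    exact hc'
                  exact ⟨1 + 1 + k', chain_trans (chain_trans s1 s2) s3,
                    by simp only [List.length_cons] at hk' ⊢; omega⟩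
            · rw [if_neg hxy]
              obtain ⟨k', hc', hk'⟩ := ih (y :: t)
                (by simp only [List.length_cons] at hlen ⊢; omega)
              cases hcr : cleanRec b (y :: t) with
              | nil =>
                  rw [hcr] at hc'
                  refine ⟨k' + 1, ?_, by simp only [List.length_cons] at hk' ⊢; omega⟩
                  rw [ofL_cons (show (y :: t) ≠ [] from by simp)]
                  refine chain_trans (chain_ctxR hc') ?_
                  exact chain_one (.base gen_unit)
                    (by
                      show x.size ≤ (node b x (unitF b)).size
                      rw [size_node]; omega)
              | cons z t' =>
                  rw [hcr] at hc'
                  refine ⟨k', ?_, by simp only [List.length_cons] at hk' ⊢; omega⟩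
                  rw [ofL_cons (show (y :: t) ≠ [] from by simp),
                    ofL_cons (show (z :: t') ≠ [] from by simp)]
                  exact chain_ctxR hc'

end NF

namespace NF

theorem gensym_FEq {x y : Formula} (h : EqGenSym x y) : FEq x y := by
  cases h with
  | orComm a c => exact .orComm a c
  | andComm a c => exact .andComm a c
  | orAssoc a c d => exact .orAssoc a c d
  | orAssoc' a c d => exact .symm (.orAssoc a c d)
  | andAssoc a c d => exact .andAssoc a c d
  | andAssoc' a c d => exact .symm (.andAssoc a c d)
  | orBot => exact .orBot y
  | orBot' => exact .symm (.orBot x)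
  | andTop => exact .andTop y
  | andTop' => exact .symm (.andTop x)
  | topTop => exact .topTop
  | topTop' => exact .symm .topTop
  | botBot => exact .botBot
  | botBot' => exact .symm .botBot

theorem ctx_FEq {x y : Formula} (h : CtxStep EqGenSym x y) : FEq x y := by
  induction h with
  | base hb => exact gensym_FEq hb
  | orL c _ ih => exact .orCongL c ih
  | orR c _ ih => exact .orCongR c ih
  | andL c _ ih => exact .andCongL c ih
  | andR c _ ih => exact .andCongR c ih

theorem chain_FEq {x y : Formula} {k} (h : ChainNI x y k) : FEq x y := by
  induction h with
  | refl a => exact .refl a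
  | step hstep _ _ ih => exact .trans (ctx_FEq hstep) ih

theorem chain_node_mk {b} {a c A C : Formula} {ka kc}
    (h1 : ChainNI a A ka) (h2 : ChainNI c C kc) (hA : IsNF A) (hC : IsNF C) :
    ∃ k, ChainNI (node b a c) (mk b A C) k ∧ k ≤ ka + kc + 5 * (A.size + C.size) := by
  obtain ⟨km, hm, hkm⟩ := chain_merge (b := b) ((toL b A).length + (toL b C).length)
    (toL b A) (toL b C) (Nat.le_refl _) toL_ne_nil toL_ne_nil
  obtain ⟨kcl, hcl, hkcl⟩ := chain_cleanRec (b := b) (mergeL (toL b A) (toL b C)).length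
    (mergeL (toL b A) (toL b C)) (Nat.le_refl _)
  rw [ofL_toL, ofL_toL] at hm
  have hmk : mk b A C = ofL b (cleanRec b (mergeL (toL b A) (toL b C))) := by
    rw [mk, cleanL_eq_cleanRec _ (sorted_mergeL _ _ (spine_sorted hA) (spine_sorted hC))]
  refine ⟨ka + (kc + (km + kcl)), ?_, ?_⟩
  · rw [hmk]
    exact chain_trans (chain_ctxL h1)
      (chain_trans (chain_ctxR h2) (chain_trans hm hcl))
  · have l1 : (toL b A).length ≤ A.size := length_toL_le_size A
    have l2 : (toL b C).length ≤ C.size := length_toL_le_size C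
    have l3 := length_mergeL (toL b A) (toL b C)
    omega

theorem chain_canon : ∀ x : Formula, ∃ k, ChainNI x (canon x) k ∧
    k ≤ 5 * (x.size * x.size) := by
  intro x
  induction x with
  | or a c iha ihc =>
      obtain ⟨ka, h1, hka⟩ := iha
      obtain ⟨kc, h2, hkc⟩ := ihc
      obtain ⟨k, hch, hk⟩ := chain_node_mk (b := true) h1 h2 (canon_isNF a) (canon_isNF c)
      refine ⟨k, hch, ?_⟩
      have sA : (canon a).size ≤ a.size := chain_size h1
      have sC : (canon c).size ≤ c.size := chain_size h2
      have ha1 : 1 ≤ a.size := size_pos a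
      have hc1 : 1 ≤ c.size := size_pos c
      have t1 : a.size ≤ a.size * c.size := Nat.le_mul_of_pos_right _ hc1
      have t2 : c.size ≤ a.size * c.size := Nat.le_mul_of_pos_left _ ha1
      have hsize : (Formula.or a c).size = a.size + c.size := rfl
      rw [hsize]
      have expand : (a.size + c.size) * (a.size + c.size) =
          a.size * a.size + 2 * (a.size * c.size) + c.size * c.size := by ring
      rw [expand]
      have hk5 : 5 * ((canon a).size + (canon c).size) ≤ 5 * (a.size + c.size) := by omega
      linarith
  | and a c iha ihc =>
      obtain ⟨ka, h1, hka⟩ := iha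
      obtain ⟨kc, h2, hkc⟩ := ihc
      obtain ⟨k, hch, hk⟩ := chain_node_mk (b := false) h1 h2 (canon_isNF a) (canon_isNF c)
      refine ⟨k, hch, ?_⟩
      have sA : (canon a).size ≤ a.size := chain_size h1
      have sC : (canon c).size ≤ c.size := chain_size h2
      have ha1 : 1 ≤ a.size := size_pos a
      have hc1 : 1 ≤ c.size := size_pos c
      have t1 : a.size ≤ a.size * c.size := Nat.le_mul_of_pos_right _ hc1
      have t2 : c.size ≤ a.size * c.size := Nat.le_mul_of_pos_left _ ha1
      have hsize : (Formula.and a c).size = a.size + c.size := rfl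
      rw [hsize]
      have expand : (a.size + c.size) * (a.size + c.size) =
          a.size * a.size + 2 * (a.size * c.size) + c.size * c.size := by ring
      rw [expand]
      have hk5 : 5 * ((canon a).size + (canon c).size) ≤ 5 * (a.size + c.size) := by omega
      linarith
  | top => exact ⟨0, .refl _, by omega⟩
  | bot => exact ⟨0, .refl _, by omega⟩
  | atom n => exact ⟨0, .refl _, by omega⟩
  | natom n => exact ⟨0, .refl _, by omega⟩

end NF


/-- Remark RemEq: the equality relation is decidable, and any two
equal formulae reach a common canonical form by `O(n²)` size-nonincreasing
rewrite steps. -/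
theorem feq_decidable_canonical :
    (∃ f : Formula → Formula → Bool, ∀ α β : Formula, FEq α β ↔ f α β = true) ∧
    ∃ C : ℕ, ∀ α β : Formula, FEq α β →
      ∃ (δ : Formula) (k₁ k₂ : ℕ),
        ChainNI α δ k₁ ∧ ChainNI β δ k₂ ∧
        k₁ + k₂ ≤ C * (α.size + β.size) ^ 2 := by
  constructor
  · refine ⟨fun α β => decide (NF.canon α = NF.canon β), fun α β => ?_⟩
    rw [decide_eq_true_eq]
    constructor
    · exact NF.canon_FEq
    · intro h
      obtain ⟨k1, h1, -⟩ := NF.chain_canon α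
      obtain ⟨k2, h2, -⟩ := NF.chain_canon β
      refine (NF.chain_FEq h1).trans ?_
      rw [h]
      exact (NF.chain_FEq h2).symm
  · refine ⟨5, fun α β h => ?_⟩
    obtain ⟨k1, h1, b1⟩ := NF.chain_canon α
    obtain ⟨k2, h2, b2⟩ := NF.chain_canon β
    refine ⟨NF.canon α, k1, k2, h1, ?_, ?_⟩
    · rw [NF.canon_FEq h]
      exact h2
    · have expand : (α.size + β.size) ^ 2 =
          α.size * α.size + 2 * (α.size * β.size) + β.size * β.size := by ring
      rw [expand]
      have hcross : 0 ≤ α.size * β.size := Nat.zero_le _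
      linarith
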